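/- (Chi-square tail bound, Laurent–Massart.) Let k ∈ ℕ, k ≥ 1, and let G₁,…,G_k be independent standard Gaussian random variables (mean 0, variance 1). Then for every β > 0: Pr[ ∑_{i=1}^k G_i² ≥ k + 2√(βk) + 2β ] ≤ e^{−β}. Equivalently, a chi-square random variable Z with k degrees of freedom satisfies Pr[ Z/k ≥ 1 + 2√(β/k) + 2β/k ] ≤ e^{−β}. -/

import Mathlib

open MeasureTheory ProbabilityTheory Real
open scoped ENNReal NNReal

lemma gaussianReal_integral_eq (g : ℝ → ℝ) :
    ∫ x, g x ∂(gaussianReal 0 1)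
      = ∫ x, gaussianPDFReal 0 1 x * g x := by
  rw [gaussianReal_of_var_ne_zero 0 one_ne_zero]
  have h1 : gaussianPDF 0 1 = fun x => ((gaussianPDFReal 0 1 x).toNNReal : ℝ≥0∞) := rfl
  rw [h1, integral_withDensity_eq_integral_smul
    ((measurable_gaussianPDFReal 0 1).real_toNNReal) g]
  congr 1 with x
  rw [NNReal.smul_def, smul_eq_mul, Real.coe_toNNReal _ (gaussianPDFReal_nonneg 0 1 x)]

lemma gaussianReal_integrable_iff (g : ℝ → ℝ) :
    Integrable g (gaussianReal 0 1) ↔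
      Integrable (fun x => gaussianPDFReal 0 1 x * g x) := by
  rw [gaussianReal_of_var_ne_zero 0 one_ne_zero]
  have h1 : gaussianPDF 0 1 = fun x => ((gaussianPDFReal 0 1 x).toNNReal : ℝ≥0∞) := rfl
  rw [h1, integrable_withDensity_iff_integrable_smul
    ((measurable_gaussianPDFReal 0 1).real_toNNReal)]
  constructor <;> intro h <;> refine h.congr (Filter.Eventually.of_forall fun x => ?_) <;>
    simp only [NNReal.smul_def, smul_eq_mul, Real.coe_toNNReal _ (gaussianPDFReal_nonneg 0 1 x)]

lemma gaussianPDFReal_mul_exp (t x : ℝ) :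
    gaussianPDFReal 0 1 x * Real.exp (t * x ^ 2)
      = (Real.sqrt (2 * π))⁻¹ * Real.exp (-(1/2 - t) * x ^ 2) := by
  simp only [gaussianPDFReal, NNReal.coe_one, mul_one, sub_zero]
  rw [mul_assoc, ← Real.exp_add]
  congr 2
  ring

lemma gaussian_exp_sq_integrable {t : ℝ} (ht : t < 1/2) :
    Integrable (fun x => Real.exp (t * x ^ 2)) (gaussianReal 0 1) := by
  rw [gaussianReal_integrable_iff]
  have : (fun x => gaussianPDFReal 0 1 x * Real.exp (t * x ^ 2))
      = fun x => (Real.sqrt (2 * π))⁻¹ * Real.exp (-(1/2 - t) * x ^ 2) := by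
    funext x; exact gaussianPDFReal_mul_exp t x
  rw [this]
  exact (integrable_exp_neg_mul_sq (by linarith)).const_mul _

lemma gaussian_exp_sq_integral {t : ℝ} (ht : t < 1/2) :
    ∫ x, Real.exp (t * x ^ 2) ∂(gaussianReal 0 1) = (Real.sqrt (1 - 2*t))⁻¹ := by
  rw [gaussianReal_integral_eq]
  have h2 : (0:ℝ) < 1/2 - t := by linarith
  calc ∫ x, gaussianPDFReal 0 1 x * Real.exp (t * x ^ 2)
      = ∫ x, (Real.sqrt (2 * π))⁻¹ * Real.exp (-(1/2 - t) * x ^ 2) := by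
        congr 1; funext x; exact gaussianPDFReal_mul_exp t x
    _ = (Real.sqrt (2 * π))⁻¹ * ∫ x, Real.exp (-(1/2 - t) * x ^ 2) :=
        MeasureTheory.integral_const_mul _ _
    _ = (Real.sqrt (2 * π))⁻¹ * Real.sqrt (π / (1/2 - t)) := by
        rw [integral_gaussian]
    _ = Real.sqrt ((2 * π)⁻¹ * (π / (1/2 - t))) := by
        rw [Real.sqrt_mul (by positivity : (0:ℝ) ≤ (2*π)⁻¹), Real.sqrt_inv]
    _ = Real.sqrt ((1 - 2*t)⁻¹) := by
        congr 1
        have hπ : (π:ℝ) ≠ 0 := Real.pi_ne_zero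
        have h3 : (1:ℝ) - 2*t ≠ 0 := by linarith
        field_simp
    _ = (Real.sqrt (1 - 2*t))⁻¹ := Real.sqrt_inv _

lemma key_ineq {s : ℝ} (hs : 0 ≤ s) : 1 + 2*s + 2*s^2 ≤ Real.exp (2*s) := by
  have h := Real.sum_le_exp_of_nonneg (by linarith : (0:ℝ) ≤ 2*s) 3
  have h2 : ∑ i ∈ Finset.range 3, (2*s)^i / (Nat.factorial i : ℝ) = 1 + 2*s + 2*s^2 := by
    simp [Finset.sum_range_succ, Nat.factorial]
    ring
  rw [h2] at h
  exact h


/-- **Laurent–Massart chi-square tail bound.** If `G₁, …, G_k` are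
independent standard Gaussian random variables (`k ≥ 1`), then for every `β > 0`,
`Pr[∑ i, G i ^ 2 ≥ k + 2√(βk) + 2β] ≤ exp (-β)`. -/
theorem chi_square_tail_laurent_massart
    {Ω : Type*} [MeasureSpace Ω] [IsProbabilityMeasure (ℙ : Measure Ω)]
    (k : ℕ) (hk : 1 ≤ k)
    (G : Fin k → Ω → ℝ)
    (hGmeas : ∀ i, Measurable (G i))
    (hindep : iIndepFun G ℙ)
    (hGlaw : ∀ i, Measure.map (G i) ℙ = gaussianReal 0 1)
    (β : ℝ) (hβ : 0 < β) :
    ℙ {ω | (k : ℝ) + 2 * Real.sqrt (β * k) + 2 * β ≤ ∑ i, (G i ω) ^ 2}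
      ≤ ENNReal.ofReal (Real.exp (-β)) := by
  classical
  have hk0 : (0:ℝ) < k := by exact_mod_cast hk
  set r : ℝ := Real.sqrt (β * k) with hrdef
  have hrpos : 0 < r := Real.sqrt_pos.mpr (by positivity)
  have hr2 : r ^ 2 = β * k := Real.sq_sqrt (by positivity)
  set a : ℝ := (k:ℝ) + 2 * r + 2 * β with hadef
  have hka : (k:ℝ) < a := by nlinarith
  have ha0 : (0:ℝ) < a := hk0.trans hka
  set t : ℝ := (a - k) / (2 * a) with htdef
  have ht0 : 0 ≤ t := div_nonneg (by linarith) (by linarith)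
  have h1mt : 1 - 2 * t = (k:ℝ) / a := by
    rw [htdef]; field_simp; ring
  have ht2 : t < 1/2 := by
    have h := div_pos hk0 ha0
    rw [← h1mt] at h; linarith
  set X : Fin k → Ω → ℝ := fun i ω => G i ω ^ 2 with hXdef
  have hXmeas : ∀ i, Measurable (X i) := fun i => (hGmeas i).pow_const 2
  have hXindep : iIndepFun X ℙ :=
    hindep.comp (fun _ x => x ^ 2) (fun _ => measurable_id.pow_const 2)
  have hint : ∀ i, Integrable (fun ω => Real.exp (t * X i ω)) ℙ := by
    intro i
    have h1 : Integrable (fun x : ℝ => Real.exp (t * x ^ 2)) (Measure.map (G i) ℙ) := by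
      rw [hGlaw i]; exact gaussian_exp_sq_integrable ht2
    have hexp : AEStronglyMeasurable (fun x : ℝ => Real.exp (t * x ^ 2))
        (Measure.map (G i) ℙ) := Measurable.aestronglyMeasurable (by measurability)
    exact (integrable_map_measure hexp (hGmeas i).aemeasurable).mp h1
  have hmgf : ∀ i, mgf (X i) ℙ t = (Real.sqrt (1 - 2*t))⁻¹ := by
    intro i
    have hexp : AEStronglyMeasurable (fun x : ℝ => Real.exp (t * x ^ 2))
        (Measure.map (G i) ℙ) := Measurable.aestronglyMeasurable (by measurability)
    have h1 : mgf (X i) ℙ t = ∫ x, Real.exp (t * x ^ 2) ∂(Measure.map (G i) ℙ) := by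
      rw [integral_map (hGmeas i).aemeasurable hexp]
      rfl
    rw [h1, hGlaw i, gaussian_exp_sq_integral ht2]
  have hmgfsum : mgf (∑ i, X i) ℙ t = ((Real.sqrt (1 - 2*t))⁻¹) ^ k := by
    rw [hXindep.mgf_sum hXmeas Finset.univ]
    simp [hmgf, Finset.prod_const, Finset.card_univ]
  have hintsum : Integrable (fun ω => Real.exp (t * (∑ i, X i) ω)) ℙ :=
    hXindep.integrable_exp_mul_sum hXmeas (fun i _ => hint i)
  have hch := measure_ge_le_exp_mul_mgf (X := ∑ i, X i) (μ := ℙ) a ht0 hintsum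
  have hta : t * a = r + β := by
    rw [htdef]; field_simp; ring
  have hsq : (Real.sqrt (1 - 2*t))⁻¹ = Real.sqrt (a / k) := by
    rw [h1mt, ← Real.sqrt_inv, inv_div]
  have hkey : a / k ≤ Real.exp (2 * (r / k)) := by
    have h := key_ineq (s := r / k) (by positivity)
    have hkne : (k:ℝ) ≠ 0 := hk0.ne'
    have h1 : (r/k)^2 = β/(k:ℝ) := by
      rw [div_pow, hr2, pow_two, mul_div_mul_right _ _ hkne]
    have heq : a / k = 1 + 2*(r/k) + 2*(r/k)^2 := by
      rw [h1, hadef, add_div, add_div, div_self hkne, mul_div_assoc, mul_div_assoc]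
    rw [heq]; exact h
  have hpow : (Real.sqrt (a / k)) ^ k ≤ Real.exp r := by
    have hx : (0:ℝ) ≤ Real.sqrt (a/k) := Real.sqrt_nonneg _
    have hsq2 : ((Real.sqrt (a/k)) ^ k) ^ 2 ≤ (Real.exp r) ^ 2 := by
      rw [← pow_mul, mul_comm k 2, pow_mul, Real.sq_sqrt (by positivity)]
      calc (a/k)^k ≤ (Real.exp (2*(r/k)))^k := pow_le_pow_left₀ (by positivity) hkey k
        _ = (Real.exp r)^2 := by
            rw [← Real.exp_nat_mul, ← Real.exp_nat_mul]
            congr 1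
            push_cast
            field_simp
    calc (Real.sqrt (a/k)) ^ k = Real.sqrt (((Real.sqrt (a/k)) ^ k) ^ 2) :=
          (Real.sqrt_sq (by positivity)).symm
      _ ≤ Real.sqrt ((Real.exp r) ^ 2) := Real.sqrt_le_sqrt hsq2
      _ = Real.exp r := Real.sqrt_sq (Real.exp_pos r).le
  have hfinal : Real.exp (-t * a) * ((Real.sqrt (1 - 2*t))⁻¹) ^ k ≤ Real.exp (-β) := by
    rw [hsq]
    calc Real.exp (-t*a) * (Real.sqrt (a/k))^k
        ≤ Real.exp (-t*a) * Real.exp r := by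
          exact mul_le_mul_of_nonneg_left hpow (Real.exp_pos _).le
      _ = Real.exp (-t*a + r) := (Real.exp_add _ _).symm
      _ = Real.exp (-β) := by
          congr 1
          rw [neg_mul, hta]
          ring
  have hset : {ω | (k:ℝ) + 2 * r + 2 * β ≤ ∑ i, (G i ω) ^ 2}
      = {ω | a ≤ (∑ i, X i) ω} := by
    ext ω
    simp only [Set.mem_setOf_eq, Finset.sum_apply, hadef, hXdef]
  rw [hset, ← ENNReal.ofReal_toReal (measure_ne_top ℙ _)]
  apply ENNReal.ofReal_le_ofReal
  calc (ℙ {ω | a ≤ (∑ i, X i) ω}).toReal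
      ≤ Real.exp (-t*a) * mgf (∑ i, X i) ℙ t := hch
    _ = Real.exp (-t*a) * ((Real.sqrt (1 - 2*t))⁻¹)^k := by rw [hmgfsum]
    _ ≤ Real.exp (-β) := hfinal
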